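/- Let p : E → S be a pre-cohesive geometric morphism and let φ : p* → p^! be the canonical natural monomorphism defined as the composite p* → p* p_* p^! → p^! (using the inverse of the counit of p_* ⊣ p^! and the counit of p* ⊣ p_*). Then p is a quality type (p_! ≅ p_*, equivalently p_* ⊣ p*) if and only if φ is an isomorphism. -/

import Mathlib

open CategoryTheory CategoryTheory.Limits

/-- A morphism `i : X ⟶ Z` is a (binary coproduct) summand if there is a morphism
`j : Y ⟶ Z` such that the cospan `X ⟶ Z ⟵ Y` is a coproduct cocone. -/
def IsSummand {C : Type*} [Category C] {X Z : C} (i : X ⟶ Z) : Prop :=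
  ∃ (Y : C) (j : Y ⟶ Z), Nonempty (IsColimit (BinaryCofan.mk i j))

/-- An object `X` is decidable if its diagonal `X ⟶ X ⨯ X` is a coproduct summand. -/
noncomputable def IsDecidableObj {C : Type*} [Category C] [HasBinaryProducts C] (X : C) : Prop :=
  IsSummand (diag X)

/-- A subobject classifier. -/
structure Classifier (C : Type*) [Category C] [HasTerminal C] where
  Ω : C
  truth : ⊤_ C ⟶ Ω
  char : ∀ {U X : C} (m : U ⟶ X), Mono m → (X ⟶ Ω)
  isPullback : ∀ {U X : C} (m : U ⟶ X) (hm : Mono m),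
    IsPullback m (terminal.from U) (char m hm) truth
  uniq : ∀ {U X : C} (m : U ⟶ X) (hm : Mono m) (c : X ⟶ Ω),
    IsPullback m (terminal.from U) c truth → c = char m hm

/-- An elementary topos: finite limits, cartesian closedness (each functor `X ⨯ -` is a
left adjoint) and a subobject classifier. -/
def IsElemTopos (C : Type*) [Category C] [HasFiniteLimits C] : Prop :=
  (∀ X : C, (prod.functor.obj X).IsLeftAdjoint) ∧ Nonempty (_root_.Classifier C)
/-- For a pre-cohesive geometric morphism `p : E → S` (adjoint string
`pShriek ⊣ pStar ⊣ pLower ⊣ pUpper` with `pStar`, `pUpper` fully faithful, the counit of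
`pStar ⊣ pLower` monic, and `pShriek` preserving finite products), the canonical natural
monomorphism `φ : pStar ⟶ pUpper`, whose component at `X` is
`pStar.map (inv (adjLowUp.counit.app X)) ≫ adjStarLow.counit.app (pUpper.obj X)`
(using the inverse of the counit of `pLower ⊣ pUpper` and the counit of `pStar ⊣ pLower`),
is an isomorphism if and only if `p` is a quality type (`pShriek ≅ pLower`). -/
theorem quality_type_iff_phi_isIso
    {E S : Type*} [Category E] [Category S]
    [HasFiniteLimits E] [HasFiniteColimits E] [HasFiniteLimits S] [HasFiniteColimits S]
    (hE : IsElemTopos E) (hS : IsElemTopos S)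
    (pShriek : E ⥤ S) (pStar : S ⥤ E) (pLower : E ⥤ S) (pUpper : S ⥤ E)
    (adjShriekStar : pShriek ⊣ pStar) (adjStarLow : pStar ⊣ pLower)
    (adjLowUp : pLower ⊣ pUpper)
    [PreservesFiniteLimits pStar]
    [pStar.Full] [pStar.Faithful] [pUpper.Full] [pUpper.Faithful]
    (hcounit : ∀ X : E, Mono (adjStarLow.counit.app X))
    [PreservesFiniteProducts pShriek] :
    Nonempty (pShriek ≅ pLower) ↔
      ∀ X : S, IsIso
        (pStar.map (inv (adjLowUp.counit.app X)) ≫ adjStarLow.counit.app (pUpper.obj X)) := by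
  -- The counit of `pStar ⊣ pLower` is an iso at every object in the image of `pStar`:
  -- it is split epi by the triangle identity, and mono by hypothesis.
  have key : ∀ A : S, IsIso (adjStarLow.counit.app (pStar.obj A)) := by
    intro A
    have tri : pStar.map (adjStarLow.unit.app A) ≫ adjStarLow.counit.app (pStar.obj A) = 𝟙 _ :=
      adjStarLow.left_triangle_components A
    have hm := hcounit (pStar.obj A)
    refine ⟨pStar.map (adjStarLow.unit.app A), ?_, tri⟩
    · rw [← cancel_mono (adjStarLow.counit.app (pStar.obj A))]
      simp [reassoc_of% tri]
  constructor
  · rintro ⟨α⟩ X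
    -- transfer `pShriek ⊣ pStar` along `α` to get `pLower ⊣ pStar`, then use uniqueness of
    -- right adjoints to get `pStar ≅ pUpper`.
    have adj' : pLower ⊣ pStar := adjShriekStar.ofNatIsoLeft α
    have γ : pStar ≅ pUpper := adj'.rightAdjointUniq adjLowUp
    have hnat := adjStarLow.counit.naturality (γ.hom.app X)
    simp only [Functor.id_map, Functor.comp_map] at hnat
    have h1 : IsIso (adjStarLow.counit.app (pStar.obj X) ≫ γ.hom.app X) := by
      have := key X; infer_instance
    have h2 : IsIso (adjStarLow.counit.app (pUpper.obj X)) := by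
      rw [show adjStarLow.counit.app (pUpper.obj X)
          = inv (pStar.map (pLower.map (γ.hom.app X)))
            ≫ (adjStarLow.counit.app (pStar.obj X) ≫ γ.hom.app X) by
        rw [← hnat]; simp]
      infer_instance
    infer_instance
  · intro h
    -- the components assemble into a natural isomorphism `pStar ≅ pUpper`.
    have Φ : pStar ≅ pUpper := by
      refine NatIso.ofComponents
        (fun X => @asIso _ _ _ _ _ (h X)) ?_
      intro X Y f
      simp only [asIso_hom]
      have n1 : f ≫ inv (adjLowUp.counit.app Y)
          = inv (adjLowUp.counit.app X) ≫ pLower.map (pUpper.map f) := by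
        rw [IsIso.comp_inv_eq]
        simp [adjLowUp.counit.naturality f]
      have n2 := adjStarLow.counit.naturality (pUpper.map f)
      calc pStar.map f ≫ pStar.map (inv (adjLowUp.counit.app Y))
            ≫ adjStarLow.counit.app (pUpper.obj Y)
          = pStar.map (f ≫ inv (adjLowUp.counit.app Y))
            ≫ adjStarLow.counit.app (pUpper.obj Y) := by
            rw [pStar.map_comp]; simp
        _ = pStar.map (inv (adjLowUp.counit.app X))
            ≫ pStar.map (pLower.map (pUpper.map f))
            ≫ adjStarLow.counit.app (pUpper.obj Y) := by
            rw [n1, pStar.map_comp]; simp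
        _ = (pStar.map (inv (adjLowUp.counit.app X))
            ≫ adjStarLow.counit.app (pUpper.obj X)) ≫ pUpper.map f := by
            have := n2
            simp only [Functor.comp_map] at this
            rw [this]; simp
    exact ⟨adjShriekStar.leftAdjointUniq (adjLowUp.ofNatIsoRight Φ.symm)⟩
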